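/- For every positive integer m, the Bernoulli number B_{2m} satisfies the recursion B_{2m} = ((2m)! · 2^{-2m} / (1 - 2^{1-2m})) · Σ_{n=1}^{m} B_{2m-2n} · (2 - 2^{2m-2n}) / ((2m-2n)! · (2n+1)!). -/

import Mathlib

open Finset Nat

private lemma bernoulli_odd_zero {n : ℕ} (h : Odd n) (h1 : 1 < n) : bernoulli n = 0 := by
  rw [bernoulli_eq_bernoulli'_of_ne_one (by omega)]
  exact bernoulli'_eq_zero_of_odd h h1

private lemma bernoulli'_eq_neg_pow (n : ℕ) : bernoulli' n = (-1 : ℚ) ^ n * bernoulli n := by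
  rcases Nat.even_or_odd n with he | ho
  · rw [he.neg_one_pow, one_mul]
    rcases eq_or_ne n 1 with rfl | hn
    · simp at he
    · rw [bernoulli_eq_bernoulli'_of_ne_one hn]
  · rw [ho.neg_one_pow]
    rcases eq_or_ne n 1 with rfl | hn
    · rw [bernoulli'_one, bernoulli_one]; norm_num
    · have h1 : 1 < n := by rcases ho with ⟨k, rfl⟩; omega
      rw [bernoulli'_eq_zero_of_odd ho h1, bernoulli_odd_zero ho h1, mul_zero]

private lemma bern_reflect (n : ℕ) :
    (Polynomial.bernoulli n).comp (1 - Polynomial.X) =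
      (-1 : Polynomial ℚ) ^ n * Polynomial.bernoulli n := by
  induction n with
  | zero => simp
  | succ n ih =>
    set p := (Polynomial.bernoulli (n + 1)).comp (1 - Polynomial.X) -
      (-1 : Polynomial ℚ) ^ (n + 1) * Polynomial.bernoulli (n + 1) with hp
    have hd : Polynomial.derivative p = 0 := by
      rw [hp, Polynomial.derivative_sub, Polynomial.derivative_comp,
        Polynomial.derivative_mul, Polynomial.derivative_bernoulli_add_one]
      simp only [Polynomial.derivative_sub, Polynomial.derivative_one,
        Polynomial.derivative_X, Polynomial.derivative_pow, Polynomial.mul_comp,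
        Polynomial.natCast_comp, Polynomial.add_comp, Polynomial.one_comp,
        Polynomial.derivative_neg, zero_sub, ih, Polynomial.derivative_bernoulli]
      push_cast
      ring
    have hc := Polynomial.eq_C_of_derivative_eq_zero hd
    have he : p.eval 0 = 0 := by
      rw [hp]
      simp only [Polynomial.eval_sub, Polynomial.eval_comp, Polynomial.eval_one,
        Polynomial.eval_X, Polynomial.eval_mul, Polynomial.eval_pow,
        Polynomial.eval_neg, sub_zero, Polynomial.bernoulli_eval_one,
        Polynomial.bernoulli_eval_zero]
      rw [bernoulli'_eq_neg_pow]
      ring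
    have hzero : p = 0 := by
      rw [hc, Polynomial.eval_C] at he
      rw [hc, he, map_zero]
    exact sub_eq_zero.mp hzero

private lemma bern_eval_half {n : ℕ} (hn : Odd n) :
    (Polynomial.bernoulli n).eval (1 / 2 : ℚ) = 0 := by
  have h := congrArg (Polynomial.eval (1 / 2 : ℚ)) (bern_reflect n)
  simp only [Polynomial.eval_comp, Polynomial.eval_sub, Polynomial.eval_one,
    Polynomial.eval_X, Polynomial.eval_mul, Polynomial.eval_pow, Polynomial.eval_neg,
    Polynomial.eval_one] at h
  norm_num at h
  rw [hn.neg_one_pow] at h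
  linarith

private lemma sum_two_pow {n : ℕ} (hn : Odd n) :
    ∑ i ∈ range (n + 1), (n.choose i : ℚ) * bernoulli i * 2 ^ i = 0 := by
  have h := bern_eval_half hn
  rw [Polynomial.bernoulli, Polynomial.eval_finset_sum] at h
  simp only [Polynomial.eval_monomial] at h
  have key : ∑ i ∈ range (n + 1), (n.choose i : ℚ) * bernoulli i * 2 ^ i =
      2 ^ n * ∑ i ∈ range (n + 1), bernoulli i * (n.choose i : ℚ) * (1 / 2 : ℚ) ^ (n - i) := by
    rw [mul_sum]
    refine sum_congr rfl fun i hi => ?_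
    rw [mem_range] at hi
    have hle : i ≤ n := by omega
    have hpow : (2 : ℚ) ^ i * 2 ^ (n - i) = 2 ^ n := by
      rw [← pow_add]; congr 1; omega
    have h2 : ((2 : ℚ) ^ (n - i)) ≠ 0 := by positivity
    have hh : (1 / 2 : ℚ) ^ (n - i) * 2 ^ (n - i) = 1 := by
      rw [← mul_pow]; norm_num
    field_simp
    linear_combination (bernoulli i * (n.choose i : ℚ) * (1 / 2 : ℚ) ^ (n - i)) * hpow -
      (bernoulli i * (n.choose i : ℚ) * 2 ^ i) * hh
  rw [key, h, mul_zero]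

private lemma sum_pairs (f : ℕ → ℚ) (k : ℕ) :
    ∑ j ∈ range (2 * k), f j = ∑ i ∈ range k, (f (2 * i) + f (2 * i + 1)) := by
  induction k with
  | zero => simp
  | succ k ih =>
    have : 2 * (k + 1) = (2 * k + 1) + 1 := by ring
    rw [this, sum_range_succ, sum_range_succ, ih, sum_range_succ]
    ring

private lemma key_sum {m : ℕ} (hm : 0 < m) :
    ∑ i ∈ range (m + 1),
      (((2 * m + 1).choose (2 * i) : ℚ) * bernoulli (2 * i) * (2 - 2 ^ (2 * i))) = 0 := by
  have hodd : Odd (2 * m + 1) := ⟨m, by ring⟩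
  have hfull : ∑ j ∈ range (2 * (m + 1)),
      (((2 * m + 1).choose j : ℚ) * bernoulli j * (2 - 2 ^ j)) = 0 := by
    have hsplit : ∀ j, ((2 * m + 1).choose j : ℚ) * bernoulli j * (2 - 2 ^ j) =
        2 * (((2 * m + 1).choose j : ℚ) * bernoulli j) -
          ((2 * m + 1).choose j : ℚ) * bernoulli j * 2 ^ j := by
      intro j; ring
    rw [show 2 * (m + 1) = (2 * m + 1) + 1 by ring]
    simp_rw [hsplit]
    rw [sum_sub_distrib, ← mul_sum, sum_two_pow hodd, sub_zero]
    rw [sum_range_succ, _root_.sum_bernoulli]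
    have h1 : (2 * m + 1 ≠ 1) := by omega
    rw [if_neg h1, zero_add, Nat.choose_self,
      bernoulli_odd_zero hodd (by omega)]
    norm_num
  rw [sum_pairs _ (m + 1)] at hfull
  have hzero : ∀ i ∈ range (m + 1),
      (((2 * m + 1).choose (2 * i + 1) : ℚ) * bernoulli (2 * i + 1) * (2 - 2 ^ (2 * i + 1))) = 0 := by
    intro i _
    rcases Nat.eq_zero_or_pos i with rfl | hi
    · norm_num [bernoulli_one]
    · rw [bernoulli_odd_zero ⟨i, by ring⟩ (by omega)]
      ring
  calc ∑ i ∈ range (m + 1),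
      (((2 * m + 1).choose (2 * i) : ℚ) * bernoulli (2 * i) * (2 - 2 ^ (2 * i)))
      = ∑ i ∈ range (m + 1),
        ((((2 * m + 1).choose (2 * i) : ℚ) * bernoulli (2 * i) * (2 - 2 ^ (2 * i))) +
          (((2 * m + 1).choose (2 * i + 1) : ℚ) * bernoulli (2 * i + 1) * (2 - 2 ^ (2 * i + 1)))) := by
        refine sum_congr rfl fun i hi => ?_
        rw [hzero i hi, add_zero]
    _ = 0 := hfull

/-- For every positive integer `m`, the Bernoulli number `B_{2m}` satisfies
`B_{2m} = ((2m)! 2^(-2m) / (1 - 2^(1-2m))) ·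
  Σ_{n=1}^{m} B_{2m-2n} (2 - 2^(2m-2n)) / ((2m-2n)! (2n+1)!)`. -/
theorem stmt_3 (m : ℕ) (hm : 0 < m) :
    bernoulli (2 * m) =
      ((2 * m)! : ℚ) * (2 : ℚ) ^ (-(2 * (m : ℤ))) / (1 - (2 : ℚ) ^ (1 - 2 * (m : ℤ))) *
        ∑ n ∈ Finset.Icc 1 m,
          bernoulli (2 * m - 2 * n) * (2 - (2 : ℚ) ^ (2 * m - 2 * n)) /
            (((2 * m - 2 * n)! : ℚ) * ((2 * n + 1)! : ℚ)) := by
  -- abbreviation for the summand of the key sum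
  set f : ℕ → ℚ := fun i =>
    ((2 * m + 1).choose (2 * i) : ℚ) * bernoulli (2 * i) * (2 - 2 ^ (2 * i)) with hf
  have hkey : (∑ i ∈ range m, f i) + f m = 0 := by
    have h := key_sum hm
    rw [sum_range_succ] at h
    exact h
  -- the main sum equals (∑ i ∈ range m, f i) / (2m+1)!
  have hS : ∑ n ∈ Finset.Icc 1 m,
      bernoulli (2 * m - 2 * n) * (2 - (2 : ℚ) ^ (2 * m - 2 * n)) /
        (((2 * m - 2 * n)! : ℚ) * ((2 * n + 1)! : ℚ)) =
      (∑ i ∈ range m, f i) / ((2 * m + 1)! : ℚ) := by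
    rw [← Finset.sum_range_reflect f m, ← Finset.Ico_add_one_right_eq_Icc, Finset.sum_Ico_eq_sum_range,
      Finset.sum_div]
    have hmm : m + 1 - 1 = m := by omega
    rw [hmm]
    refine sum_congr rfl fun i hi => ?_
    rw [mem_range] at hi
    have hn1 : 1 ≤ 1 + i := by omega
    have hnm : 1 + i ≤ m := by omega
    have h2i : 2 * (m - 1 - i) = 2 * m - 2 * (1 + i) := by omega
    rw [hf]
    simp only []
    rw [h2i]
    have hle : 2 * m - 2 * (1 + i) ≤ 2 * m + 1 := by omega
    rw [Nat.cast_choose ℚ hle]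
    have hsub : 2 * m + 1 - (2 * m - 2 * (1 + i)) = 2 * (1 + i) + 1 := by omega
    rw [hsub]
    have hfac1 : ((2 * m - 2 * (1 + i))! : ℚ) ≠ 0 := by
      exact_mod_cast (Nat.factorial_pos _).ne'
    have hfac2 : ((2 * (1 + i) + 1)! : ℚ) ≠ 0 := by
      exact_mod_cast (Nat.factorial_pos _).ne'
    have hfac3 : ((2 * m + 1)! : ℚ) ≠ 0 := by
      exact_mod_cast (Nat.factorial_pos _).ne'
    field_simp
  -- evaluate f m
  have hfm : f m = (2 * m + 1) * (bernoulli (2 * m) * (2 - 2 ^ (2 * m))) := by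
    rw [hf]
    simp only []
    rw [Nat.choose_succ_self_right]
    push_cast
    ring
  have hsum : ∑ i ∈ range m, f i = -(2 * m + 1) * (bernoulli (2 * m) * (2 - 2 ^ (2 * m))) := by
    rw [hfm] at hkey
    linarith
  rw [hS, hsum]
  -- now pure arithmetic with powers of two
  have hq : (2 : ℚ) ^ (-(2 * (m : ℤ))) = ((2 : ℚ) ^ (2 * m))⁻¹ := by
    rw [← zpow_natCast (2 : ℚ) (2 * m), ← zpow_neg]
    norm_cast
  have hq2 : (2 : ℚ) ^ (1 - 2 * (m : ℤ)) = 2 * ((2 : ℚ) ^ (2 * m))⁻¹ := by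
    rw [sub_eq_add_neg, zpow_add₀ (by norm_num : (2:ℚ) ≠ 0), zpow_one,
      ← zpow_natCast (2 : ℚ) (2 * m), ← zpow_neg]
    norm_cast
  rw [hq, hq2]
  have hfac : ((2 * m)! : ℚ) ≠ 0 := by exact_mod_cast (Nat.factorial_pos _).ne'
  have hfac' : ((2 * m + 1)! : ℚ) = (2 * m + 1) * ((2 * m)! : ℚ) := by
    rw [Nat.factorial_succ]; push_cast; ring
  have hqpos : (4 : ℚ) ≤ (2 : ℚ) ^ (2 * m) := by
    calc (4 : ℚ) = 2 ^ 2 := by norm_num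
    _ ≤ 2 ^ (2 * m) := by
        apply pow_le_pow_right₀ (by norm_num)
        omega
  have hqne : (2 : ℚ) ^ (2 * m) ≠ 0 := by positivity
  have hqne2 : (2 : ℚ) ^ (2 * m) - 2 ≠ 0 := by linarith
  have h1m : (1 : ℚ) - 2 * ((2 : ℚ) ^ (2 * m))⁻¹ ≠ 0 := by
    rw [sub_ne_zero]
    intro h
    have : (2 : ℚ) ^ (2 * m) = 2 := by
      field_simp at h
      linarith
    linarith
  have h2m1 : ((2 : ℚ) * m + 1) ≠ 0 := by positivity
  rw [hfac']
  field_simp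
  ring
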